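/- Let T > 0, σ > 0 and let d₀, d_T be nonzero real numbers. Let μ := |d₀/d_T| and λ := d₀²/(Tσ²), and let ν be the inverse Gaussian distribution IGau(μ, λ). Define g : (0,T) → ℝ by g(t) = t^{−3/2}(T − t)^{−1/2} exp(−d_T²/(2(T − t)σ²) − d₀²/(2tσ²)); then 0 < ∫₀^T g(t) dt < ∞, and the pushforward of ν under the map k ↦ T/(1/k + 1) = Tk/(k + 1) is the probability measure on (0, T) with Lebesgue density t ↦ g(t)/∫₀^T g(s) ds. -/

import Mathlib

open MeasureTheory Real Set
open scoped ENNReal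

theorem my_lintegral_image {s : Set ℝ} {f f' : ℝ → ℝ} (hs : MeasurableSet s)
    (hf' : ∀ x ∈ s, HasDerivWithinAt f (f' x) s x) (hf : InjOn f s) (g : ℝ → ℝ≥0∞) :
    ∫⁻ x in f '' s, g x = ∫⁻ x in s, ENNReal.ofReal |f' x| * g (f x) := by
  simpa only [ContinuousLinearMap.det_toSpanSingleton] using
    lintegral_image_eq_lintegral_abs_det_fderiv_mul volume hs
      (fun x hx => (hf' x hx).hasFDerivWithinAt) hf g

lemma hasDerivAt_u (a b : ℝ) {x : ℝ} (hx : 0 < x) :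
    HasDerivAt (fun y => √a * √y - √b / √y) (√a/(2*√x) + √b/(2*(x*√x))) x := by
  have hsx : (0:ℝ) < √x := Real.sqrt_pos.2 hx
  have h1 : HasDerivAt Real.sqrt (1/(2*√x)) x := Real.hasDerivAt_sqrt hx.ne'
  have h2 : HasDerivAt (fun y => (√y)⁻¹) (-(1/(2*√x)) / (√x)^2) x := h1.inv hsx.ne'
  have h3 := (h1.const_mul (√a)).sub (h2.const_mul (√b))
  have hx2 : √x ^ 2 = x := Real.sq_sqrt hx.le
  have heq : (fun y => √a * √y - √b / √y) = fun y => √a * √y - √b * (√y)⁻¹ := by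
    funext y; rw [div_eq_mul_inv]
  rw [heq]
  refine h3.congr_deriv ?_
  rw [hx2]
  field_simp
  ring

lemma u_injOn (a b : ℝ) (ha : 0 < a) (hb : 0 < b) :
    InjOn (fun y => √a * √y - √b / √y) (Ioi (0:ℝ)) := by
  intro x hx y hy h
  simp only at h
  have hsx : (0:ℝ) < √x := Real.sqrt_pos.2 hx
  have hsy : (0:ℝ) < √y := Real.sqrt_pos.2 hy
  have hsa : (0:ℝ) < √a := Real.sqrt_pos.2 ha
  have hsb : (0:ℝ) < √b := Real.sqrt_pos.2 hb
  have key : (√x - √y) * (√a * (√x * √y) + √b) = 0 := by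
    field_simp at h
    nlinarith [h]
  have h2 : √a * (√x * √y) + √b > 0 := by positivity
  have h3 : √x = √y := by
    rcases mul_eq_zero.1 key with h' | h'
    · linarith
    · linarith
  have := congrArg (fun t => t^2) h3
  simpa [Real.sq_sqrt hx.le, Real.sq_sqrt hy.le] using this

lemma u_surj (a b : ℝ) (ha : 0 < a) (hb : 0 < b) :
    (fun y => √a * √y - √b / √y) '' (Ioi (0:ℝ)) = univ := by
  have hsa : (0:ℝ) < √a := Real.sqrt_pos.2 ha
  have hsb : (0:ℝ) < √b := Real.sqrt_pos.2 hb
  ext y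
  simp only [mem_univ, iff_true, mem_image]
  set D := Real.sqrt (y^2 + 4*(√a*√b)) with hD
  have hD2 : D^2 = y^2 + 4*(√a*√b) := Real.sq_sqrt (by positivity)
  have hDy : |y| < D := by
    have : √(y^2) < D := by
      apply Real.sqrt_lt_sqrt (sq_nonneg y)
      nlinarith
    simpa [Real.sqrt_sq_eq_abs] using this
  have hr : 0 < (y + D)/(2*√a) := by
    have : -y ≤ |y| := neg_le_abs y
    apply div_pos (by linarith) (by positivity)
  set r := (y + D)/(2*√a) with hrdef
  refine ⟨r^2, mem_Ioi.2 (by positivity), ?_⟩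
  have hsr : √(r^2) = r := Real.sqrt_sq hr.le
  simp only [hsr]
  have : √a * r^2 - y * r - √b = 0 := by
    have h4 : (y + D)^2 = y^2 + 2*y*D + D^2 := by ring
    rw [hrdef]; field_simp
    nlinarith [hD2]
  field_simp
  nlinarith [this, hr]

lemma key_integral (a b : ℝ) (ha : 0 < a) (hb : 0 < b) :
    IntegrableOn (fun x => 1/(x*√x) * exp (-(a*x + b/x))) (Ioi (0:ℝ)) ∧
    ∫ x in Ioi (0:ℝ), 1/(x*√x) * exp (-(a*x + b/x)) = √π / √b * exp (-(2*(√a*√b))) := by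
  have hsa : (0:ℝ) < √a := Real.sqrt_pos.2 ha
  have hsb : (0:ℝ) < √b := Real.sqrt_pos.2 hb
  set u : ℝ → ℝ := fun y => √a * √y - √b / √y with hu
  set u' : ℝ → ℝ := fun x => √a/(2*√x) + √b/(2*(x*√x)) with hu'
  have hderiv : ∀ x ∈ Ioi (0:ℝ), HasDerivWithinAt u (u' x) (Ioi 0) x :=
    fun x hx => (hasDerivAt_u a b hx).hasDerivWithinAt
  set F1 : ℝ → ℝ := fun x => √a/(2*√x) * exp (-(a*x + b/x)) with hF1
  set F2 : ℝ → ℝ := fun x => √b/(2*(x*√x)) * exp (-(a*x + b/x)) with hF2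
  -- pointwise identity on Ioi 0
  have hpt : ∀ x ∈ Ioi (0:ℝ), |u' x| • exp (-(u x)^2)
      = exp (2*(√a*√b)) * (F1 x + F2 x) := by
    intro x hx
    rw [mem_Ioi] at hx
    have hsx : (0:ℝ) < √x := Real.sqrt_pos.2 hx
    have hx2 : √x * √x = x := Real.mul_self_sqrt hx.le
    have ha2 : √a * √a = a := Real.mul_self_sqrt ha.le
    have hb2 : √b * √b = b := Real.mul_self_sqrt hb.le
    have hupos : 0 < u' x := by
      simp only [hu']; positivity
    have husq : (u x)^2 = a*x + b/x - 2*(√a*√b) := by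
      simp only [hu]
      field_simp
      rw [Real.sq_sqrt hx.le]; linear_combination (x^3)*ha2 + x*hb2
    rw [smul_eq_mul, abs_of_pos hupos, husq]
    rw [show -(a*x + b/x - 2*(√a*√b)) = 2*(√a*√b) + -(a*x + b/x) by ring, Real.exp_add]
    simp only [hu', hF1, hF2]
    ring
  -- Gaussian integral
  have hgint : Integrable (fun y : ℝ => exp (-y^2)) := by
    simpa using integrable_exp_neg_mul_sq (one_pos)
  have hgval : ∫ y : ℝ, exp (-y^2) = √π := by
    simpa using integral_gaussian 1
  -- change of variables
  have himage := integral_image_eq_integral_abs_deriv_smul measurableSet_Ioi hderiv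
    (u_injOn a b ha hb) (fun y => exp (-y^2))
  rw [u_surj a b ha hb, setIntegral_univ, hgval] at himage
  have hint' : IntegrableOn (fun x => |u' x| • exp (-(u x)^2)) (Ioi 0) :=
    (integrableOn_image_iff_integrableOn_abs_deriv_smul measurableSet_Ioi hderiv
      (u_injOn a b ha hb) (fun y => exp (-y^2))).1
      (by rw [u_surj a b ha hb]; exact hgint.integrableOn)
  have hintc : IntegrableOn (fun x => exp (2*(√a*√b)) * (F1 x + F2 x)) (Ioi 0) :=
    hint'.congr_fun hpt measurableSet_Ioi
  have hintsum : IntegrableOn (fun x => F1 x + F2 x) (Ioi 0) := by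
    have h := hintc.const_mul (exp (-(2*(√a*√b))))
    refine IntegrableOn.congr_fun h (fun x hx => ?_) measurableSet_Ioi
    rw [← mul_assoc, ← Real.exp_add]
    simp
  -- measurability of F1, F2
  have hmF1 : Measurable F1 := by
    apply Measurable.mul
    · exact (measurable_const.div (continuous_sqrt.measurable.const_mul 2))
    · exact (Real.continuous_exp.measurable.comp
        ((measurable_id.const_mul a |>.add (measurable_const.div measurable_id)).neg))
  have hmF2 : Measurable F2 := by
    apply Measurable.mul
    · exact (measurable_const.div ((measurable_id.mul continuous_sqrt.measurable).const_mul 2))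
    · exact (Real.continuous_exp.measurable.comp
        ((measurable_id.const_mul a |>.add (measurable_const.div measurable_id)).neg))
  have hF1nn : ∀ x ∈ Ioi (0:ℝ), 0 ≤ F1 x := by
    intro x hx; rw [mem_Ioi] at hx
    have hsx : (0:ℝ) < √x := Real.sqrt_pos.2 hx
    simp only [hF1]; positivity
  have hF2nn : ∀ x ∈ Ioi (0:ℝ), 0 ≤ F2 x := by
    intro x hx; rw [mem_Ioi] at hx
    have hsx : (0:ℝ) < √x := Real.sqrt_pos.2 hx
    simp only [hF2]; positivity
  have hintF1 : IntegrableOn F1 (Ioi 0) := by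
    refine Integrable.mono hintsum (hmF1.aestronglyMeasurable) ?_
    rw [ae_restrict_iff' measurableSet_Ioi]
    filter_upwards with x hx
    rw [Real.norm_eq_abs, Real.norm_eq_abs, abs_of_nonneg (hF1nn x hx),
      abs_of_nonneg (by exact add_nonneg (hF1nn x hx) (hF2nn x hx))]
    linarith [hF2nn x hx]
  have hintF2 : IntegrableOn F2 (Ioi 0) := by
    refine Integrable.mono hintsum (hmF2.aestronglyMeasurable) ?_
    rw [ae_restrict_iff' measurableSet_Ioi]
    filter_upwards with x hx
    rw [Real.norm_eq_abs, Real.norm_eq_abs, abs_of_nonneg (hF2nn x hx),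
      abs_of_nonneg (by exact add_nonneg (hF1nn x hx) (hF2nn x hx))]
    linarith [hF1nn x hx]
  -- value of ∫ (F1 + F2)
  have hsum_val : ∫ x in Ioi (0:ℝ), (F1 x + F2 x) = √π * exp (-(2*(√a*√b))) := by
    have h1 : ∫ x in Ioi (0:ℝ), |u' x| • exp (-(u x)^2)
        = ∫ x in Ioi (0:ℝ), exp (2*(√a*√b)) * (F1 x + F2 x) :=
      setIntegral_congr_fun measurableSet_Ioi hpt
    rw [h1, integral_const_mul] at himage
    have he : exp (2*(√a*√b)) ≠ 0 := (Real.exp_pos _).ne'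
    field_simp [Real.exp_neg] at himage ⊢
    rw [himage, mul_right_comm, ← Real.exp_add, add_neg_cancel, Real.exp_zero, one_mul]
  -- second substitution v x = b/(a*x)
  set v : ℝ → ℝ := fun x => b/(a*x) with hv
  have hvv : ∀ x ∈ Ioi (0:ℝ), b/(a * (b/(a*x))) = x := by
    intro x hx; rw [mem_Ioi] at hx; field_simp
  have hvderiv : ∀ x ∈ Ioi (0:ℝ), HasDerivWithinAt v (-(b/(a*x^2))) (Ioi 0) x := by
    intro x hx; rw [mem_Ioi] at hx
    have h := (hasDerivAt_inv hx.ne').const_mul (b/a)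
    have heq : (fun y : ℝ => b/a * y⁻¹) = v := by
      funext y
      show b / a * y⁻¹ = b / (a * y)
      rw [div_eq_mul_inv, div_eq_mul_inv, mul_inv, mul_assoc]
    rw [heq] at h
    have : b/a * -(x^2)⁻¹ = -(b/(a*x^2)) := by field_simp
    rw [this] at h
    exact h.hasDerivWithinAt
  have hvinj : InjOn v (Ioi (0:ℝ)) := by
    intro x hx y hy h
    have h1 := hvv x hx
    simp only [hv] at h
    rw [h, hvv y hy] at h1
    exact h1.symm
  have hvimg : v '' (Ioi (0:ℝ)) = Ioi 0 := by
    ext y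
    constructor
    · rintro ⟨x, hx, rfl⟩
      rw [mem_Ioi] at hx ⊢
      simp only [hv]
      positivity
    · intro hy
      rw [mem_Ioi] at hy
      exact ⟨b/(a*y), mem_Ioi.2 (by positivity), hvv y hy⟩
  have hF1F2 : ∫ y in Ioi (0:ℝ), F1 y = ∫ x in Ioi (0:ℝ), F2 x := by
    have h := integral_image_eq_integral_abs_deriv_smul measurableSet_Ioi hvderiv hvinj F1
    rw [hvimg] at h
    rw [h]
    apply setIntegral_congr_fun measurableSet_Ioi
    intro x hx
    rw [mem_Ioi] at hx
    have hsx : (0:ℝ) < √x := Real.sqrt_pos.2 hx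
    have hx2 : √x * √x = x := Real.mul_self_sqrt hx.le
    have ha2 : √a * √a = a := Real.mul_self_sqrt ha.le
    have hb2 : √b * √b = b := Real.mul_self_sqrt hb.le
    have habs : |(-(b/(a*x^2)))| = b/(a*x^2) := by
      rw [abs_neg, abs_of_pos (by positivity)]
    have he1 : a*(b/(a*x)) = b/x := by field_simp
    have he2 : b/(b/(a*x)) = a*x := by
      rw [div_div_eq_mul_div, mul_comm, mul_div_assoc, div_self hb.ne', mul_one]
    have hsq : √(b/(a*x)) = √b/(√a*√x) := by
      rw [show b/(a*x) = b/(a*x) from rfl, Real.sqrt_div hb.le, Real.sqrt_mul ha.le]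
    simp only [smul_eq_mul, hF1, hF2, hv]
    rw [habs, he1, he2, hsq]
    rw [show -(b/x + a*x) = -(a*x + b/x) by ring]
    rw [show b/(a*x^2) * (√a/(2*(√b/(√a*√x))) * exp (-(a*x + b/x)))
        = (b/(a*x^2) * (√a/(2*(√b/(√a*√x))))) * exp (-(a*x + b/x)) by ring]
    congr 1
    field_simp
    linear_combination (b*√x^2)*ha2 + (a*b)*hx2 - (a*x)*hb2
  have hF2val : ∫ x in Ioi (0:ℝ), F2 x = √π * exp (-(2*(√a*√b)))/2 := by
    have hadd : ∫ x in Ioi (0:ℝ), (F1 x + F2 x)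
        = (∫ x in Ioi (0:ℝ), F1 x) + ∫ x in Ioi (0:ℝ), F2 x := integral_add hintF1 hintF2
    rw [hadd, hF1F2] at hsum_val
    linarith
  constructor
  · refine IntegrableOn.congr_fun (hintF2.const_mul (2/√b)) (fun x hx => ?_) measurableSet_Ioi
    rw [mem_Ioi] at hx
    have hsx : (0:ℝ) < √x := Real.sqrt_pos.2 hx
    simp only [hF2]
    rw [← mul_assoc]
    congr 1
    field_simp
  · have hcong : ∫ x in Ioi (0:ℝ), 1/(x*√x) * exp (-(a*x + b/x))
        = ∫ x in Ioi (0:ℝ), (2/√b) * F2 x := by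
      apply setIntegral_congr_fun measurableSet_Ioi
      intro x hx
      rw [mem_Ioi] at hx
      have hsx : (0:ℝ) < √x := Real.sqrt_pos.2 hx
      simp only [hF2]
      rw [← mul_assoc]
      congr 1
      field_simp
    rw [hcong, integral_const_mul, hF2val]
    field_simp
    skip

section phi
variable {T : ℝ}

lemma phi_hasDerivAt (hT : 0 < T) {k : ℝ} (hk : 0 < k) :
    HasDerivAt (fun k => T * k / (k + 1)) (T/(k+1)^2) k := by
  have hk1 : k + 1 ≠ 0 := by positivity
  have h := ((hasDerivAt_id k).const_mul T).div ((hasDerivAt_id k).add_const 1) hk1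
  refine h.congr_deriv ?_
  simp only [id]; field_simp
  ring

lemma phi_injOn (hT : 0 < T) : InjOn (fun k => T * k / (k + 1)) (Ioi (0:ℝ)) := by
  intro x hx y hy h
  rw [mem_Ioi] at hx hy
  have hx1 : x + 1 ≠ 0 := by positivity
  have hy1 : y + 1 ≠ 0 := by positivity
  simp only at h
  rw [div_eq_div_iff hx1 hy1] at h
  have : T * (x - y) = 0 := by ring_nf; nlinarith [h]
  rcases mul_eq_zero.1 this with h' | h'
  · exact absurd h' hT.ne'
  · linarith

lemma phi_image (hT : 0 < T) : (fun k => T * k / (k + 1)) '' (Ioi (0:ℝ)) = Ioo 0 T := by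
  ext t
  simp only [mem_image, mem_Ioi, mem_Ioo]
  constructor
  · rintro ⟨k, hk, rfl⟩
    constructor
    · positivity
    · rw [div_lt_iff₀ (by positivity)]
      nlinarith
  · rintro ⟨ht0, htT⟩
    refine ⟨t/(T-t), div_pos ht0 (by linarith), ?_⟩
    have h1 : T - t ≠ 0 := by linarith [htT]
    field_simp; ring

lemma phi_sub (hT : 0 < T) {k : ℝ} (hk : 0 < k) :
    T - T * k / (k + 1) = T / (k + 1) := by
  have hk1 : k + 1 ≠ 0 := by positivity
  field_simp
  ring
end phi

lemma hpoint_aux (T σ d0 dT : ℝ) (hT : 0 < T) (hσ : 0 < σ) {k : ℝ} (hk : 0 < k) :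
    T/(k+1)^2 * ((T*k/(k+1)) ^ (-(3:ℝ)/2) * (T - T*k/(k+1)) ^ (-(1:ℝ)/2) *
      exp (-dT^2/(2*(T - T*k/(k+1))*σ^2) - d0^2/(2*(T*k/(k+1))*σ^2)))
    = exp (-(dT^2/(2*T*σ^2) + d0^2/(2*T*σ^2)))/T *
      (1/(k*√k) * exp (-((dT^2/(2*T*σ^2))*k + (d0^2/(2*T*σ^2))/k))) := by
  have hk1 : (0:ℝ) < k + 1 := by positivity
  have ht : (0:ℝ) < T*k/(k+1) := by positivity
  have hTt : T - T*k/(k+1) = T/(k+1) := phi_sub hT hk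
  have h1 : (T*k/(k+1)) ^ (-(3:ℝ)/2) = 1/((T*k/(k+1))*√(T*k/(k+1))) := by
    rw [show (-(3:ℝ)/2) = -((3:ℝ)/2) by norm_num, Real.rpow_neg ht.le, one_div]
    congr 1
    rw [show ((3:ℝ)/2) = 1 + 1/2 by norm_num, Real.rpow_add ht, Real.rpow_one,
      ← Real.sqrt_eq_rpow]
  have h2 : (T - T*k/(k+1)) ^ (-(1:ℝ)/2) = 1/√(T/(k+1)) := by
    rw [hTt, show (-(1:ℝ)/2) = -((1:ℝ)/2) by norm_num, Real.rpow_neg (by positivity), one_div]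
    rw [one_div, Real.sqrt_eq_rpow]
    norm_num
  have hs1 : √(T*k/(k+1)) = √T*√k/√(k+1) := by
    rw [Real.sqrt_div (by positivity) (k+1), Real.sqrt_mul hT.le]
  have hs2 : √(T/(k+1)) = √T/√(k+1) := Real.sqrt_div hT.le (k+1)
  have hexp : -dT^2/(2*(T - T*k/(k+1))*σ^2) - d0^2/(2*(T*k/(k+1))*σ^2)
      = -(dT^2/(2*T*σ^2) + d0^2/(2*T*σ^2)) + -((dT^2/(2*T*σ^2))*k + (d0^2/(2*T*σ^2))/k) := by
    rw [hTt]
    field_simp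
    ring
  rw [h1, h2, hs1, hs2, hexp, Real.exp_add]
  have hsT : (0:ℝ) < √T := Real.sqrt_pos.2 hT
  have hsk : (0:ℝ) < √k := Real.sqrt_pos.2 hk
  have hs1' : (0:ℝ) < √(k+1) := Real.sqrt_pos.2 hk1
  have hT2 : √T*√T = T := Real.mul_self_sqrt hT.le
  have hk2 : √k*√k = k := Real.mul_self_sqrt hk.le
  have hk12 : √(k+1)*√(k+1) = k+1 := Real.mul_self_sqrt hk1.le
  generalize rexp (-(dT ^ 2 / (2 * T * σ ^ 2) + d0 ^ 2 / (2 * T * σ ^ 2))) = E1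
  generalize rexp (-(dT ^ 2 / (2 * T * σ ^ 2) * k + d0 ^ 2 / (2 * T * σ ^ 2) / k)) = E2
  field_simp
  linear_combination (T*E1*E2)*hk12 - ((k+1)*E1*E2)*hT2

lemma density_pointwise (T σ d0 dT : ℝ) (hT : 0 < T) (hσ : 0 < σ)
    (hd0 : d0 ≠ 0) (hdT : dT ≠ 0) {k : ℝ} (hk : 0 < k) :
    √((d0^2/(T*σ^2))/(2*π*k^3)) * exp (-(d0^2/(T*σ^2))*(k - |d0/dT|)^2/(2*|d0/dT|^2*k))
    = (exp (-(dT^2/(2*T*σ^2) + d0^2/(2*T*σ^2)))/T *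
        (1/(k*√k) * exp (-((dT^2/(2*T*σ^2))*k + (d0^2/(2*T*σ^2))/k)))) /
      (exp (-(dT^2/(2*T*σ^2) + d0^2/(2*T*σ^2)))/T *
        (√π/√(d0^2/(2*T*σ^2)) * exp (-(2*(√(dT^2/(2*T*σ^2))*√(d0^2/(2*T*σ^2))))))) := by
  have hA0 : (0:ℝ) < |d0| := abs_pos.2 hd0
  have hAT : (0:ℝ) < |dT| := abs_pos.2 hdT
  have hA02 : |d0|^2 = d0^2 := sq_abs d0
  have hAT2 : |dT|^2 = dT^2 := sq_abs dT
  have hsk : (0:ℝ) < √k := Real.sqrt_pos.2 hk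
  have hsk2 : √k*√k = k := Real.mul_self_sqrt hk.le
  have hsπ : (0:ℝ) < √π := Real.sqrt_pos.2 pi_pos
  have hsπ2 : √π*√π = π := Real.mul_self_sqrt pi_pos.le
  have hs2T : √(2*T*σ^2)*√(2*T*σ^2) = 2*T*σ^2 := Real.mul_self_sqrt (by positivity)
  have hs2Tpos : (0:ℝ) < √(2*T*σ^2) := Real.sqrt_pos.2 (by positivity)
  have hsα : √(dT^2/(2*T*σ^2)) = |dT|/√(2*T*σ^2) := by
    rw [Real.sqrt_div (sq_nonneg dT), Real.sqrt_sq_eq_abs]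
  have hsβ : √(d0^2/(2*T*σ^2)) = |d0|/√(2*T*σ^2) := by
    rw [Real.sqrt_div (sq_nonneg d0), Real.sqrt_sq_eq_abs]
  have habs : |d0/dT| = |d0|/|dT| := abs_div d0 dT
  -- prefactor
  have hXnn : (0:ℝ) ≤ √(d0^2/(2*T*σ^2))/(√π*(k*√k)) := by positivity
  have hX : (d0^2/(T*σ^2))/(2*π*k^3) = (√(d0^2/(2*T*σ^2))/(√π*(k*√k)))^2 := by
    rw [div_pow, mul_pow, mul_pow, Real.sq_sqrt (show (0:ℝ) ≤ d0^2/(2*T*σ^2) by positivity),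
      Real.sq_sqrt pi_pos.le, Real.sq_sqrt hk.le]
    field_simp
    skip
  have h2ab : 2*(√(dT^2/(2*T*σ^2))*√(d0^2/(2*T*σ^2))) = |d0| * |dT|/(T*σ^2) := by
    rw [hsα, hsβ, div_mul_div_comm, hs2T]
    field_simp
    skip
  have hexp : -(d0^2/(T*σ^2))*(k - |d0/dT|)^2/(2*|d0/dT|^2*k)
      = |d0| * |dT|/(T*σ^2) - ((dT^2/(2*T*σ^2))*k + (d0^2/(2*T*σ^2))/k) := by
    rw [habs]
    field_simp
    linear_combination (k^2*dT^2 - 2*k*|d0| * |dT|)*hA02 - (d0^2*k^2)*hAT2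
  rw [hX, Real.sqrt_sq hXnn, hexp, h2ab]
  have hEE : exp (|d0| * |dT|/(T*σ^2) - ((dT^2/(2*T*σ^2))*k + (d0^2/(2*T*σ^2))/k))
      * exp (-(|d0| * |dT|/(T*σ^2)))
      = exp (-((dT^2/(2*T*σ^2))*k + (d0^2/(2*T*σ^2))/k)) := by
    rw [← Real.exp_add]; congr 1; ring
  have hE0 : exp (-(dT^2/(2*T*σ^2) + d0^2/(2*T*σ^2))) ≠ 0 := (Real.exp_pos _).ne'
  have hsβpos : (0:ℝ) < √(d0^2/(2*T*σ^2)) := by rw [hsβ]; positivity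
  set W := |d0| * |dT| / (T * σ ^ 2) with hWdef
  set V := dT ^ 2 / (2 * T * σ ^ 2) * k + d0 ^ 2 / (2 * T * σ ^ 2) / k with hVdef
  set e1 := exp (W - V) with he1def
  set e2 := exp (-V) with he2def
  set e3 := exp (-W) with he3def
  set E0 := exp (-(dT ^ 2 / (2 * T * σ ^ 2) + d0 ^ 2 / (2 * T * σ ^ 2))) with hE0def
  set p := √(d0 ^ 2 / (2 * T * σ ^ 2)) with hpdef
  have he1 : (0:ℝ) < e1 := Real.exp_pos _
  have he2 : (0:ℝ) < e2 := Real.exp_pos _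
  have he3 : (0:ℝ) < e3 := Real.exp_pos _
  have hE0p : (0:ℝ) < E0 := Real.exp_pos _
  rw [eq_div_iff (by positivity)]
  field_simp
  linear_combination hEE

/-- The inverse Gaussian distribution `IGau(μ, λ)`: the measure on `(0,∞)` with
Lebesgue density `x ↦ √(λ/(2πx³)) · exp(−λ(x−μ)²/(2μ²x))`. -/
noncomputable def invGaussian (μ lam : ℝ) : Measure ℝ :=
  (volume.restrict (Set.Ioi (0 : ℝ))).withDensity
    (fun x => ENNReal.ofReal
      (Real.sqrt (lam / (2 * π * x ^ 3)) * Real.exp (-lam * (x - μ) ^ 2 / (2 * μ ^ 2 * x))))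

theorem first_passage_time_density_as_transformed_inverse_gaussian
    (T σ d0 dT : ℝ) (hT : 0 < T) (hσ : 0 < σ) (hd0 : d0 ≠ 0) (hdT : dT ≠ 0)
    (g : ℝ → ℝ)
    (hg : ∀ t, g t = t ^ (-(3 : ℝ) / 2) * (T - t) ^ (-(1 : ℝ) / 2) *
      Real.exp (-dT ^ 2 / (2 * (T - t) * σ ^ 2) - d0 ^ 2 / (2 * t * σ ^ 2))) :
    (0 < ∫ t in Set.Ioo (0 : ℝ) T, g t) ∧
    IntegrableOn g (Set.Ioo (0 : ℝ) T) ∧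
    Measure.map (fun k => T * k / (k + 1))
        (invGaussian |d0 / dT| (d0 ^ 2 / (T * σ ^ 2))) =
      (volume.restrict (Set.Ioo (0 : ℝ) T)).withDensity
        (fun t => ENNReal.ofReal (g t / ∫ s in Set.Ioo (0 : ℝ) T, g s)) := by
  have hdT2 : (0:ℝ) < dT^2 := lt_of_le_of_ne (sq_nonneg dT) (Ne.symm (pow_ne_zero 2 hdT))
  have hd02 : (0:ℝ) < d0^2 := lt_of_le_of_ne (sq_nonneg d0) (Ne.symm (pow_ne_zero 2 hd0))
  set α := dT^2/(2*T*σ^2) with hαdef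
  set β := d0^2/(2*T*σ^2) with hβdef
  have hα : 0 < α := by positivity
  have hβ : 0 < β := by positivity
  obtain ⟨hKint, hKval⟩ := key_integral α β hα hβ
  have hΦd : ∀ k ∈ Ioi (0:ℝ), HasDerivWithinAt (fun k => T * k / (k + 1))
      (T/(k+1)^2) (Ioi 0) k := fun k hk => (phi_hasDerivAt hT hk).hasDerivWithinAt
  have hgval : ∀ k ∈ Ioi (0:ℝ), |T/(k+1)^2| • g (T * k / (k + 1))
      = exp (-(α+β))/T * (1/(k*√k) * exp (-(α*k + β/k))) := by
    intro k hk
    rw [mem_Ioi] at hk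
    have hk1 : (0:ℝ) < k + 1 := by positivity
    rw [smul_eq_mul, abs_of_pos (by positivity), hg]
    exact hpoint_aux T σ d0 dT hT hσ hk
  have hInt : ∫ t in Ioo (0:ℝ) T, g t
      = exp (-(α+β))/T * (√π/√β * exp (-(2*(√α*√β)))) := by
    rw [← phi_image hT,
      integral_image_eq_integral_abs_deriv_smul measurableSet_Ioi hΦd (phi_injOn hT) g,
      setIntegral_congr_fun measurableSet_Ioi hgval, integral_const_mul, hKval]
  have hsπ : (0:ℝ) < √π := Real.sqrt_pos.2 pi_pos
  have hsβ : (0:ℝ) < √β := Real.sqrt_pos.2 hβ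
  have hcpos : (0:ℝ) < ∫ t in Ioo (0:ℝ) T, g t := by
    rw [hInt]; positivity
  have hIntg : IntegrableOn g (Ioo (0:ℝ) T) := by
    rw [← phi_image hT]
    refine (integrableOn_image_iff_integrableOn_abs_deriv_smul measurableSet_Ioi hΦd
      (phi_injOn hT) g).2 ?_
    refine IntegrableOn.congr_fun ?_ (fun k hk => (hgval k hk).symm) measurableSet_Ioi
    exact hKint.const_mul _
  refine ⟨hcpos, hIntg, ?_⟩
  have hΦm : Measurable (fun k : ℝ => T * k / (k + 1)) :=
    (measurable_id.const_mul T).div (measurable_id.add_const 1)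
  ext s hs
  rw [Measure.map_apply hΦm hs, invGaussian, withDensity_apply _ (hΦm hs),
    withDensity_apply _ hs, Measure.restrict_restrict (hΦm hs), Measure.restrict_restrict hs]
  have hset : s ∩ Ioo (0:ℝ) T = (fun k => T * k / (k + 1)) '' (Ioi 0 ∩ (fun k : ℝ => T * k / (k + 1)) ⁻¹' s) := by
    rw [Set.image_inter_preimage, phi_image hT, inter_comm]
  rw [hset, my_lintegral_image (measurableSet_Ioi.inter (hΦm hs))
    (fun k hk => (phi_hasDerivAt hT hk.1).hasDerivWithinAt)
    ((phi_injOn hT).mono inter_subset_left) _]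
  rw [show (fun k : ℝ => T * k / (k + 1)) ⁻¹' s ∩ Ioi 0 = Ioi 0 ∩ (fun k : ℝ => T * k / (k + 1)) ⁻¹' s from inter_comm _ _]
  refine setLIntegral_congr_fun (measurableSet_Ioi.inter (hΦm hs)) ?_
  intro k hk
  obtain ⟨hk0, -⟩ := hk
  rw [mem_Ioi] at hk0
  have hk1 : (0:ℝ) < k + 1 := by positivity
  beta_reduce; rw [← ENNReal.ofReal_mul (abs_nonneg _)]
  congr 1
  have h := hgval k (mem_Ioi.2 hk0)
  rw [smul_eq_mul] at h
  rw [← mul_div_assoc, h, hInt]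
  exact density_pointwise T σ d0 dT hT hσ hd0 hdT hk0
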